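/- Let Θ be a compact metric space, κ_1, κ_2, ... i.i.d. random elements of a measurable space S, and z : S × Θ → ℝ jointly measurable, continuous in θ for each s, with E[sup_{θ ∈ Θ} |z(κ_1, θ)|] < ∞. Then with probability one, sup_{θ ∈ Θ} |N^{-1} ∑_{i=1}^N z(κ_i, θ) − E z(κ_1, θ)| → 0 as N → ∞. -/

import Mathlib

open MeasureTheory Filter

/-- In a second countable metric space with the Borel σ-algebra, a map is measurable
as soon as all distance functions to fixed points are measurable. -/
lemma measurable_of_measurable_dist' {α E : Type*} [MeasurableSpace α] [MetricSpace E]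
    [SecondCountableTopology E] [MeasurableSpace E] [BorelSpace E] {f : α → E}
    (h : ∀ c : E, Measurable fun s => dist (f s) c) : Measurable f := by
  have hb : TopologicalSpace.IsTopologicalBasis {s : Set E | ∃ c r, s = Metric.ball c r} := by
    apply TopologicalSpace.isTopologicalBasis_of_isOpen_of_nhds
    · rintro _ ⟨c, r, rfl⟩; exact Metric.isOpen_ball
    · intro x u hx hu
      obtain ⟨ε, εpos, hε⟩ := Metric.isOpen_iff.1 hu x hx
      exact ⟨Metric.ball x ε, ⟨x, ε, rfl⟩, Metric.mem_ball_self εpos, hε⟩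
  have key : ∀ t ∈ {s : Set E | ∃ c r, s = Metric.ball c r}, MeasurableSet (f ⁻¹' t) := by
    rintro _ ⟨c, r, rfl⟩
    have : f ⁻¹' Metric.ball c r = (fun s => dist (f s) c) ⁻¹' Set.Iio r := rfl
    rw [this]
    exact (h c) measurableSet_Iio
  have h2 : Measurable[_, MeasurableSpace.generateFrom {s : Set E | ∃ c r, s = Metric.ball c r}]
      f := measurable_generateFrom key
  rwa [← hb.borel_eq_generateFrom, ← BorelSpace.measurable_eq (α := E)] at h2

/-- The sup of a continuous function on a compact space equals the sup over a dense subset. -/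
lemma iSup_eq_iSup_dense {Θ : Type*} [MetricSpace Θ] [CompactSpace Θ] [Nonempty Θ]
    {D : Set Θ} (hD : Dense D) [Nonempty D] {F : Θ → ℝ} (hF : Continuous F) :
    ⨆ θ, F θ = ⨆ d : D, F (d : Θ) := by
  obtain ⟨θ0, -, hθ0⟩ := isCompact_univ.exists_isMaxOn Set.univ_nonempty hF.continuousOn
  have hub : ∀ θ, F θ ≤ F θ0 := fun θ => hθ0 (Set.mem_univ θ)
  have bddD : BddAbove (Set.range fun d : D => F (d : Θ)) :=
    ⟨F θ0, Set.forall_mem_range.2 fun d => hub d⟩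
  have h1 : ⨆ θ, F θ = F θ0 :=
    le_antisymm (ciSup_le hub) (le_ciSup ⟨F θ0, Set.forall_mem_range.2 hub⟩ θ0)
  have h2 : F θ0 ≤ ⨆ d : D, F (d : Θ) := by
    obtain ⟨u, humem, hulim⟩ := mem_closure_iff_seq_limit.1 (hD θ0)
    have hFu : Tendsto (fun n => F (u n)) atTop (nhds (F θ0)) :=
      (hF.tendsto θ0).comp hulim
    exact le_of_tendsto hFu (Eventually.of_forall fun n =>
      le_ciSup bddD (⟨u n, humem n⟩ : D))
  rw [h1]
  exact le_antisymm h2 (ciSup_le fun d => hub d)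

/-- Uniform strong law of large numbers (Fortet–Mourier LLN in `C(Θ)`). -/
theorem uniform_slln {Ω : Type*} [MeasurableSpace Ω] (μ : Measure Ω) [IsProbabilityMeasure μ]
    {S : Type*} [MeasurableSpace S]
    {Θ : Type*} [MetricSpace Θ] [CompactSpace Θ] [Nonempty Θ]
    [MeasurableSpace Θ] [BorelSpace Θ]
    (κ : ℕ → Ω → S) (hmeas : ∀ i, Measurable (κ i))
    (hindep : ProbabilityTheory.iIndepFun κ μ)
    (hident : ∀ i, Measure.map (κ i) μ = Measure.map (κ 0) μ)
    (z : S → Θ → ℝ) (hz : Measurable (Function.uncurry z))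
    (hcont : ∀ s, Continuous (z s))
    (hint : Integrable (fun ω => ⨆ θ, |z (κ 0 ω) θ|) μ) :
    ∀ᵐ ω ∂μ, Tendsto
      (fun N : ℕ => ⨆ θ, |(N : ℝ)⁻¹ * ∑ i ∈ Finset.range N, z (κ i ω) θ -
        ∫ ω', z (κ 0 ω') θ ∂μ|)
      atTop (nhds 0) := by
  letI : MeasurableSpace C(Θ, ℝ) := borel _
  haveI : BorelSpace C(Θ, ℝ) := ⟨rfl⟩
  set f : S → C(Θ, ℝ) := fun s => ⟨z s, hcont s⟩ with hf_def
  have hzs : ∀ θ, Measurable fun s => z s θ := fun θ =>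
    hz.comp (measurable_id.prodMk measurable_const)
  obtain ⟨D, Dcount, Ddense⟩ := TopologicalSpace.exists_countable_dense Θ
  haveI : Countable D := Dcount.to_subtype
  haveI : Nonempty D := Ddense.nonempty.to_subtype
  have hdist : ∀ c : C(Θ, ℝ), ∀ s, dist (f s) c = ⨆ d : D, |z s (d : Θ) - c (d : Θ)| := by
    intro c s
    rw [dist_eq_norm, ContinuousMap.norm_eq_iSup_norm]
    simp only [ContinuousMap.sub_apply, Real.norm_eq_abs]
    exact iSup_eq_iSup_dense Ddense (((hcont s).sub c.continuous).abs)
  have hfmeas : Measurable f := by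
    apply measurable_of_measurable_dist'
    intro c
    have h : (fun s => dist (f s) c) = fun s => ⨆ d : D, |z s (d : Θ) - c (d : Θ)| :=
      funext (hdist c)
    rw [h]
    exact Measurable.iSup fun d => ((hzs d).sub measurable_const).abs
  set X : ℕ → Ω → C(Θ, ℝ) := fun i ω => f (κ i ω) with hX_def
  have hXm : ∀ i, Measurable (X i) := fun i => hfmeas.comp (hmeas i)
  have hnorm : ∀ i ω, ‖X i ω‖ = ⨆ θ, |z (κ i ω) θ| := by
    intro i ω
    rw [ContinuousMap.norm_eq_iSup_norm]
    simp [Real.norm_eq_abs, X, f]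
  have hXint : Integrable (X 0) μ := by
    refine Integrable.mono' hint ((hXm 0).stronglyMeasurable.aestronglyMeasurable)
      (Eventually.of_forall fun ω => le_of_eq (hnorm 0 ω))
  have hindep' : Pairwise (Function.onFun (ProbabilityTheory.IndepFun · · μ) X) := fun i j hij =>
    (hindep.indepFun hij).comp hfmeas hfmeas
  have hident' : ∀ i, ProbabilityTheory.IdentDistrib (X i) (X 0) μ μ := fun i =>
    ⟨(hXm i).aemeasurable, (hXm 0).aemeasurable, by
      show Measure.map (f ∘ κ i) μ = Measure.map (f ∘ κ 0) μ
      rw [← Measure.map_map hfmeas (hmeas i), ← Measure.map_map hfmeas (hmeas 0), hident i]⟩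
  have hSL := ProbabilityTheory.strong_law_ae X hXint hindep' hident'
  have hEval : ∀ θ, (∫ ω', X 0 ω' ∂μ) θ = ∫ ω', z (κ 0 ω') θ ∂μ := by
    intro θ
    have h := (ContinuousMap.evalCLM ℝ θ).integral_comp_comm hXint
    simpa [ContinuousMap.evalCLM, X, f] using h.symm
  filter_upwards [hSL] with ω hω
  rw [tendsto_iff_norm_sub_tendsto_zero] at hω
  apply hω.congr
  intro N
  rw [ContinuousMap.norm_eq_iSup_norm]
  refine iSup_congr fun θ => ?_
  simp [ContinuousMap.sub_apply, ContinuousMap.smul_apply, hEval θ, Real.norm_eq_abs,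
    smul_eq_mul, X, f]
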